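/- In the free group F_n of rank n ≥ 2 with the standard symmetric generating set, every nontrivial element w of word length m satisfies Av(w) = m + 2 - 2/n, and hence κ(w) = (2 - 2n)/(mn) < 0. -/

import Mathlib

open Filter Topology

section WL
variable {G : Type*} [Group G]

/-- Word length of `g` with respect to a generating set `S`. -/
noncomputable def wl (S : Set G) (g : G) : ℕ :=
  sInf {n | ∃ l : List G, (∀ x ∈ l, x ∈ S) ∧ l.length = n ∧ l.prod = g}

/-- Average word length of conjugates of `g` by elements of `S`. -/
noncomputable def Av (S : Finset G) (g : G) : ℝ :=
  (∑ a ∈ S, (wl (S : Set G) (a⁻¹ * g * a) : ℝ)) / S.card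

/-- Medium-scale Ricci curvature `κ(g) = (|g| - Av(g))/|g|`. -/
noncomputable def curv (S : Finset G) (g : G) : ℝ :=
  ((wl (S : Set G) g : ℝ) - Av S g) / (wl (S : Set G) g)

end WL

/-- The standard symmetric generating set of the free group `F_n`. -/
noncomputable def freeGens (n : ℕ) : Finset (FreeGroup (Fin n)) := by
  classical
  exact Finset.univ.image (fun i => FreeGroup.of i) ∪
    Finset.univ.image (fun i => (FreeGroup.of i)⁻¹)

namespace StmtAux

open FreeGroup List

variable {α : Type*} [DecidableEq α]

/-- The no-cancellation chain condition. -/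
def Chn (L : List (α × Bool)) : Prop :=
  List.Chain' (fun a b => ¬(a.1 = b.1 ∧ a.2 = !b.2)) L

lemma reduce_eq_self_of_chn {L : List (α × Bool)} (h : Chn L) : reduce L = L := by
  induction L with
  | nil => rfl
  | cons x L ih =>
    have hL : reduce L = L := ih h.tail
    rw [reduce.cons, hL]
    cases L with
    | nil => rfl
    | cons y t =>
      have := (List.isChain_cons_cons.mp h).1
      simp only [this, if_false]

lemma chn_reduce (L : List (α × Bool)) : Chn (reduce L) := by
  induction L with
  | nil => exact List.isChain_nil
  | cons x L ih =>
    rw [reduce.cons]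
    rcases h : reduce L with _ | ⟨y, t⟩
    · exact List.isChain_singleton x
    · rw [h] at ih
      by_cases hc : x.1 = y.1 ∧ x.2 = !y.2
      · simp only [hc, and_self, if_true]
        exact ih.tail
      · simp only [hc, if_false]
        exact List.isChain_cons_cons.mpr ⟨hc, ih⟩

lemma chn_toWord (x : FreeGroup α) : Chn x.toWord := by
  rw [← reduce_toWord]; exact chn_reduce _

lemma invRev_singleton (p : α × Bool) : invRev [p] = [(p.1, !p.2)] := by
  simp [invRev]

lemma mk_singleton_inv (p : α × Bool) : (mk [p])⁻¹ = mk [(p.1, !p.2)] := by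
  rw [inv_mk, invRev_singleton]

lemma mk_singleton_mul_inv (p : α × Bool) :
    mk [(p.1, !p.2)] * mk [p] = 1 := by
  rw [← mk_singleton_inv, inv_mul_cancel]

lemma cancel_iff (x y : α × Bool) : (x.1 = y.1 ∧ x.2 = !y.2) ↔ x = (y.1, !y.2) := by
  cases x; simp [Prod.ext_iff]

lemma chn_cons_iff {x : α × Bool} {L : List (α × Bool)} :
    Chn (x :: L) ↔ (∀ y ∈ L.head?, ¬(x.1 = y.1 ∧ x.2 = !y.2)) ∧ Chn L :=
  List.isChain_cons

/-- Key conjugation length formula. -/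
lemma conj_len (p : α × Bool) (L : List (α × Bool)) (hC : Chn L) (hne : L ≠ []) :
    ((FreeGroup.norm ((mk [p])⁻¹ * mk L * mk [p]) : ℤ)) =
      (L.length : ℤ) + 2 - (if L.head? = some p then 2 else 0)
        - (if L.getLast? = some (p.1, !p.2) then 2 else 0) := by
  obtain ⟨q, hq⟩ : ∃ q : α × Bool, q = (p.1, !p.2) := ⟨_, rfl⟩
  rw [← hq]
  have hinv : (mk [p])⁻¹ = mk [q] := by rw [mk_singleton_inv, hq]
  have hinv' : (mk [q])⁻¹ = mk [p] := by
    rw [mk_singleton_inv, hq]; congr 1; simp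
  have hpq : p ≠ q := by
    intro h; apply Bool.not_ne_self p.2
    have := congrArg Prod.snd h; rw [hq] at this; simpa using this.symm
  obtain ⟨a, T, rfl⟩ : ∃ a T, L = a :: T := by
    cases L with
    | nil => exact absurd rfl hne
    | cons a T => exact ⟨a, T, rfl⟩
  obtain ⟨I, b, hIb⟩ : ∃ I c, a :: T = I ++ [c] :=
    ⟨(a :: T).dropLast, (a :: T).getLast (by simp),
      (List.dropLast_append_getLast (by simp)).symm⟩
  have hhead : (a :: T).head? = some a := rfl
  have hlast : (a :: T).getLast? = some b := by rw [hIb]; exact List.getLast?_concat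
  have hnorm : ∀ M : List (α × Bool), Chn M → (FreeGroup.norm (mk M) : ℤ) = M.length := by
    intro M hM
    have : (mk M).toWord = M := by rw [toWord_mk, reduce_eq_self_of_chn hM]
    simp [FreeGroup.norm, this]
  by_cases hha : a = p <;> by_cases hbq : b = q
  · -- case D : both cancel
    rw [hha] at hC hIb hhead hlast ⊢
    rw [hbq] at hIb hlast
    have hIne : I ≠ [] := by
      rintro rfl
      rw [show ([] : List (α × Bool)) ++ [q] = [q] from rfl] at hIb
      exact hpq (List.head_eq_of_cons_eq hIb)
    obtain ⟨M, hM⟩ : ∃ M, I = p :: M := by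
      cases I with
      | nil => exact absurd rfl hIne
      | cons i M =>
        have : i = p := (List.head_eq_of_cons_eq hIb.symm)
        exact ⟨M, by rw [this]⟩
    have hT : T = M ++ [q] := by
      rw [hM] at hIb
      exact List.tail_eq_of_cons_eq hIb
    have hexpr : (mk [p])⁻¹ * mk (p :: T) * mk [p] = mk M := by
      rw [hT, show p :: (M ++ [q]) = [p] ++ M ++ [q] from by simp, ← mul_mk, ← mul_mk,
        hinv]
      rw [show mk [q] * (mk [p] * mk M * mk [q]) * mk [p]
          = (mk [q] * mk [p]) * mk M * (mk [q] * mk [p]) from by group]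
      rw [← hinv, inv_mul_cancel, one_mul, mul_one]
    have hMchn : Chn M := by
      have h1 : Chn (M ++ [q]) := hT ▸ hC.tail
      exact (List.isChain_append.mp h1).1
    rw [hexpr, hnorm M hMchn]
    rw [if_pos (by rw [hhead]), if_pos (by rw [hlast])]
    have : (p :: T).length = M.length + 2 := by rw [hT]; simp
    rw [this]; push_cast; ring
  · -- case B : only left cancels
    rw [hha] at hC hIb hhead hlast ⊢
    have hexpr : (mk [p])⁻¹ * mk (p :: T) * mk [p] = mk (T ++ [p]) := by
      rw [show (p :: T : List (α × Bool)) = [p] ++ T from rfl, ← mul_mk, ← mul_mk]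
      group
    have hchn : Chn (T ++ [p]) := by
      cases T with
      | nil => exact List.isChain_singleton p
      | cons y t =>
        refine List.isChain_append.mpr ⟨hC.tail, List.isChain_singleton p, ?_⟩
        intro x hx z hz
        simp only [List.head?_cons, Option.mem_def, Option.some.injEq] at hz
        subst hz
        rw [cancel_iff, ← hq]
        intro hcon
        apply hbq
        have : (y :: t).getLast? = some b := by
          have := hlast
          rwa [List.getLast?_cons_cons] at this
        rw [Option.mem_def, this, Option.some.injEq] at hx
        rw [hx]; exact hcon
    rw [hexpr, hnorm _ hchn]
    rw [if_pos (by rw [hhead]), if_neg (by rw [hlast]; simpa using hbq)]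
    simp only [List.length_cons, List.length_append, List.length_singleton, List.length_nil]
    push_cast; ring
  · -- case C : only right cancels
    rw [hbq] at hIb hlast
    rw [hIb] at hC hhead ⊢
    have hexpr : (mk [p])⁻¹ * mk (I ++ [q]) * mk [p] = mk (q :: I) := by
      have h1 : mk [q] * mk [p] = (1 : FreeGroup α) := by rw [← hinv, inv_mul_cancel]
      rw [← mul_mk, hinv, show mk [q] * (mk I * mk [q]) * mk [p]
          = (mk [q] * mk I) * (mk [q] * mk [p]) from by group, h1, mul_one, mul_mk]
      rfl
    have hchn : Chn (q :: I) := by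
      rw [chn_cons_iff]
      refine ⟨?_, (hIb ▸ hC : Chn (I ++ [q])).prefix (List.prefix_append _ _)⟩
      intro y hy
      rw [cancel_iff]
      intro hcon
      apply hha
      have hyhd : (I ++ [q]).head? = some y := by
        cases I with
        | nil => simp at hy
        | cons i t => simpa using hy
      have hay : a = y := by
        have := hhead.symm.trans hyhd
        simpa using this
      have hpa : q = (a.1, !a.2) := by rw [hay]; exact hcon
      rw [hq] at hpa
      simp only [Prod.ext_iff, Bool.not_inj_iff] at hpa
      exact Prod.ext hpa.1.symm hpa.2.symm
    rw [hexpr, hnorm _ hchn]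
    rw [if_neg (by rw [hhead]; simpa using hha),
      if_pos (List.getLast?_concat)]
    simp only [List.length_cons, List.length_append, List.length_singleton, List.length_nil]
    push_cast; ring
  · -- case A : no cancellation
    have hexpr : (mk [p])⁻¹ * mk (a :: T) * mk [p] = mk (q :: (a :: T) ++ [p]) := by
      rw [hinv, mul_mk, mul_mk]
      rfl
    have hchn : Chn (q :: (a :: T) ++ [p]) := by
      rw [show (q :: (a :: T) ++ [p]) = q :: ((a :: T) ++ [p]) from rfl, chn_cons_iff]
      constructor
      · intro y hy
        have hay : a = y := by simpa using hy
        rw [cancel_iff]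
        intro hcon
        apply hha
        rw [← hay, hq] at hcon
        simp only [Prod.ext_iff, Bool.not_inj_iff] at hcon
        exact Prod.ext hcon.1.symm hcon.2.symm
      · refine List.isChain_append.mpr ⟨hC, List.isChain_singleton p, ?_⟩
        intro x hx z hz
        simp only [List.head?_cons, Option.mem_def, Option.some.injEq] at hz
        subst hz
        rw [cancel_iff, ← hq]
        intro hcon
        apply hbq
        rw [Option.mem_def, hlast, Option.some.injEq] at hx
        rw [hx]; exact hcon
    rw [hexpr, hnorm _ hchn]
    rw [if_neg (by rw [hhead]; simpa using hha),
      if_neg (by rw [hlast]; simpa using hbq)]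
    simp only [List.length_cons, List.length_append, List.length_singleton, List.length_nil]
    push_cast; ring


lemma prod_map_mk (L : List (α × Bool)) :
    (L.map fun p => FreeGroup.mk [p]).prod = FreeGroup.mk L := by
  induction L with
  | nil => simp [FreeGroup.one_eq_mk]
  | cons x t ih => rw [List.map_cons, List.prod_cons, ih, FreeGroup.mul_mk]; rfl

lemma norm_mk_singleton (p : α × Bool) : FreeGroup.norm (FreeGroup.mk [p]) = 1 := by
  simp [FreeGroup.norm, FreeGroup.toWord_mk, FreeGroup.reduce_singleton]

lemma mk_singleton_injective :
    Function.Injective (fun p : α × Bool => FreeGroup.mk [p]) := by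
  intro p p' h
  have := congrArg FreeGroup.toWord h
  simpa [FreeGroup.toWord_mk, FreeGroup.reduce_singleton] using this

lemma bar_eq_comm (x y : α × Bool) : y = (x.1, !x.2) ↔ x = (y.1, !y.2) := by
  constructor <;> (rintro rfl; simp)

end StmtAux

open StmtAux in
lemma freeGens_eq (n : ℕ) :
    freeGens n = Finset.univ.image (fun p : Fin n × Bool => FreeGroup.mk [p]) := by
  have hof : ∀ i : Fin n, FreeGroup.of i = FreeGroup.mk [(i, true)] := fun _ => rfl
  have hofinv : ∀ i : Fin n, (FreeGroup.of i)⁻¹ = FreeGroup.mk [(i, false)] := by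
    intro i
    rw [hof, FreeGroup.inv_mk]
    simp [FreeGroup.invRev]
  ext a
  simp only [freeGens, Finset.mem_union, Finset.mem_image, Finset.mem_univ, true_and]
  constructor
  · rintro (⟨i, hi⟩ | ⟨i, hi⟩)
    · exact ⟨(i, true), by rw [← hi, hof]⟩
    · exact ⟨(i, false), by rw [← hi, hofinv]⟩
  · rintro ⟨⟨i, b⟩, rfl⟩
    cases b
    · right; exact ⟨i, (hofinv i).symm⟩
    · left; exact ⟨i, (hof i).symm⟩

open StmtAux in
lemma wl_eq_norm (n : ℕ) (g : FreeGroup (Fin n)) :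
    wl ((freeGens n : Finset (FreeGroup (Fin n))) : Set (FreeGroup (Fin n))) g
      = FreeGroup.norm g := by
  have hmem : ∃ l : List (FreeGroup (Fin n)),
      (∀ x ∈ l, x ∈ ((freeGens n : Finset (FreeGroup (Fin n))) : Set (FreeGroup (Fin n)))) ∧
        l.length = FreeGroup.norm g ∧ l.prod = g := by
    refine ⟨g.toWord.map (fun p => FreeGroup.mk [p]), ?_, by simp [FreeGroup.norm], ?_⟩
    · intro x hx
      simp only [List.mem_map] at hx
      obtain ⟨p, _, rfl⟩ := hx
      rw [freeGens_eq]
      simp only [Finset.coe_image, Finset.coe_univ, Set.image_univ, Set.mem_range]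
      exact ⟨p, rfl⟩
    · rw [prod_map_mk, FreeGroup.mk_toWord]
  have hlow : ∀ l : List (FreeGroup (Fin n)),
      (∀ x ∈ l, x ∈ ((freeGens n : Finset (FreeGroup (Fin n))) : Set (FreeGroup (Fin n)))) →
        FreeGroup.norm l.prod ≤ l.length := by
    intro l
    induction l with
    | nil => simp
    | cons x t ih =>
      intro hl
      have hx : FreeGroup.norm x = 1 := by
        have hmem2 := hl x (by simp)
        rw [freeGens_eq] at hmem2
        simp only [Finset.coe_image, Finset.coe_univ, Set.image_univ, Set.mem_range] at hmem2
        obtain ⟨p, rfl⟩ := hmem2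
        exact norm_mk_singleton p
      calc FreeGroup.norm (x :: t).prod = FreeGroup.norm (x * t.prod) := by rw [List.prod_cons]
        _ ≤ FreeGroup.norm x + FreeGroup.norm t.prod := FreeGroup.norm_mul_le _ _
        _ ≤ 1 + t.length := by
            exact add_le_add (le_of_eq hx) (ih (fun y hy => hl y (List.mem_cons_of_mem _ hy)))
        _ = (x :: t).length := by simp [Nat.add_comm]
  refine le_antisymm (Nat.sInf_le hmem) (le_csInf ⟨_, hmem⟩ ?_)
  rintro k ⟨l, hl, rfl, hprod⟩
  rw [← hprod]
  exact hlow l hl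

open StmtAux

theorem stmt7 (n : ℕ) (hn : 2 ≤ n) (w : FreeGroup (Fin n)) (hw : w ≠ 1) :
    Av (freeGens n) w =
        (wl ((freeGens n : Finset (FreeGroup (Fin n))) : Set (FreeGroup (Fin n))) w : ℝ)
          + 2 - 2 / n ∧
      curv (freeGens n) w =
        (2 - 2 * n) /
          ((wl ((freeGens n : Finset (FreeGroup (Fin n))) : Set (FreeGroup (Fin n))) w : ℝ) * n) ∧
      curv (freeGens n) w < 0 := by
  classical
  set m := FreeGroup.norm w with hm
  have hwl : wl ((freeGens n : Finset (FreeGroup (Fin n))) : Set (FreeGroup (Fin n))) w = m :=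
    wl_eq_norm n w
  have hmpos : 0 < m := Nat.pos_of_ne_zero (by simp [hm, FreeGroup.norm_eq_zero, hw])
  have hn0 : (n : ℝ) ≠ 0 := Nat.cast_ne_zero.mpr (by omega)
  have hm0 : (m : ℝ) ≠ 0 := Nat.cast_ne_zero.mpr hmpos.ne'
  have hinj : Function.Injective (fun p : Fin n × Bool => FreeGroup.mk [p]) :=
    mk_singleton_injective
  have hcard : (freeGens n).card = 2 * n := by
    rw [freeGens_eq, Finset.card_image_of_injective _ hinj, Finset.card_univ]
    simp [Fintype.card_prod, Nat.mul_comm]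
  have hL : w.toWord ≠ [] := by
    simpa [FreeGroup.toWord_eq_nil_iff] using hw
  obtain ⟨h0, hh0⟩ : ∃ h0, w.toWord.head? = some h0 :=
    Option.isSome_iff_exists.mp (List.isSome_head?.mpr hL)
  obtain ⟨t0, ht0⟩ : ∃ t0, w.toWord.getLast? = some t0 :=
    Option.isSome_iff_exists.mp (List.getLast?_isSome.mpr hL)
  have key : ∀ p : Fin n × Bool,
      (wl ((freeGens n : Finset (FreeGroup (Fin n))) : Set (FreeGroup (Fin n)))
          ((FreeGroup.mk [p])⁻¹ * w * FreeGroup.mk [p]) : ℝ)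
        = ((m : ℝ) + 2) - (if p = h0 then 2 else 0)
          - (if p = (t0.1, !t0.2) then 2 else 0) := by
    intro p
    rw [wl_eq_norm]
    have hc := conj_len p w.toWord (chn_toWord w) hL
    rw [FreeGroup.mk_toWord] at hc
    have hite1 : (w.toWord.head? = some p) ↔ (p = h0) := by
      rw [hh0]
      simp only [Option.some.injEq]
      exact ⟨fun h => h.symm, fun h => h.symm⟩
    have hite2 : (w.toWord.getLast? = some (p.1, !p.2)) ↔ (p = (t0.1, !t0.2)) := by
      rw [ht0]
      simp only [Option.some.injEq]
      exact bar_eq_comm p t0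
    simp only [hite1, hite2] at hc
    have hlen : w.toWord.length = m := rfl
    rw [hlen] at hc
    by_cases h1 : p = h0 <;> by_cases h2 : p = (t0.1, !t0.2)
    · rw [if_pos h1, if_pos h2] at hc ⊢; exact_mod_cast hc
    · rw [if_pos h1, if_neg h2] at hc ⊢; exact_mod_cast hc
    · rw [if_neg h1, if_pos h2] at hc ⊢; exact_mod_cast hc
    · rw [if_neg h1, if_neg h2] at hc ⊢; exact_mod_cast hc
  have hsum : ∑ a ∈ freeGens n,
      (wl ((freeGens n : Finset (FreeGroup (Fin n))) : Set (FreeGroup (Fin n)))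
        (a⁻¹ * w * a) : ℝ) = 2 * n * ((m : ℝ) + 2) - 4 := by
    have hrw := Finset.sum_image (s := (Finset.univ : Finset (Fin n × Bool)))
      (f := fun a => (wl ((freeGens n : Finset (FreeGroup (Fin n))) : Set (FreeGroup (Fin n)))
        (a⁻¹ * w * a) : ℝ))
      (g := fun p : Fin n × Bool => FreeGroup.mk [p]) (fun p _ p' _ h => hinj h)
    rw [← freeGens_eq] at hrw
    rw [hrw]
    rw [Finset.sum_congr rfl (fun p _ => key p)]
    rw [Finset.sum_sub_distrib, Finset.sum_sub_distrib]
    have s1 : ∑ _p : Fin n × Bool, ((m : ℝ) + 2) = 2 * n * ((m : ℝ) + 2) := by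
      rw [Finset.sum_const, Finset.card_univ]
      simp [Fintype.card_prod]
      ring
    have s2 : ∑ p : Fin n × Bool, (if p = h0 then (2 : ℝ) else 0) = 2 := by
      rw [Finset.sum_ite_eq' Finset.univ h0 (fun _ => (2 : ℝ))]
      simp
    have s3 : ∑ p : Fin n × Bool, (if p = (t0.1, !t0.2) then (2 : ℝ) else 0) = 2 := by
      rw [Finset.sum_ite_eq' Finset.univ (t0.1, !t0.2) (fun _ => (2 : ℝ))]
      simp
    rw [s1, s2, s3]
    ring
  have hAv : Av (freeGens n) w = (m : ℝ) + 2 - 2 / n := by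
    rw [Av, hsum, hcard]
    push_cast
    field_simp
    ring
  have hcurv : curv (freeGens n) w = (2 - 2 * (n : ℝ)) / ((m : ℝ) * n) := by
    rw [curv, hAv, hwl]
    field_simp
    ring
  refine ⟨by rw [hwl]; exact hAv, ⟨by rw [hwl]; exact hcurv, ?_⟩⟩
  rw [hcurv]
  apply div_neg_of_neg_of_pos
  · have h2n : (2 : ℝ) ≤ (n : ℝ) := by exact_mod_cast hn
    linarith
  · have : (0 : ℝ) < m := by exact_mod_cast hmpos
    have : (0 : ℝ) < n := by positivity
    positivity
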